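/- arXiv:1204.5633 — 2 statements merged into one kernel-verified Lean document; each statement's English description precedes it below -/
import Mathlib

section
/- Let (V_n)_{n∈ℕ} and (W_n)_{n∈ℕ} be two sequences of real-valued random variables on a common probability space such that (1) the sequence (W_n) is tight, and (2) for all k ∈ ℝ and all ε > 0, lim_{n→∞} P(V_n ≤ k, W_n ≥ k + ε) = 0 and lim_{n→∞} P(V_n ≥ k + ε, W_n ≤ k) = 0. Then V_n − W_n → 0 in probability as n → ∞. -/
open MeasureTheory Filter

/-- Ghosh's (1971) lemma: if `(W_n)` is tight and for all `k ∈ ℝ`, `ε > 0` both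
`P(V_n ≤ k, W_n ≥ k + ε) → 0` and `P(V_n ≥ k + ε, W_n ≤ k) → 0`, then
`V_n - W_n → 0` in probability. -/
theorem ghosh_lemma
    {Ω : Type*} [MeasurableSpace Ω] (P : Measure Ω) [IsProbabilityMeasure P]
    (V W : ℕ → Ω → ℝ)
    (htight : ∀ δ : ℝ, 0 < δ → ∃ K : ℝ, 0 < K ∧ ∀ n, (P {ω | K < |W n ω|}).toReal ≤ δ)
    (h1 : ∀ (k ε : ℝ), 0 < ε →
      Tendsto (fun n => (P {ω | V n ω ≤ k ∧ k + ε ≤ W n ω}).toReal) atTop (nhds 0))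
    (h2 : ∀ (k ε : ℝ), 0 < ε →
      Tendsto (fun n => (P {ω | k + ε ≤ V n ω ∧ W n ω ≤ k}).toReal) atTop (nhds 0)) :
    TendstoInMeasure P (fun n ω => V n ω - W n ω) atTop (fun _ => (0 : ℝ)) := by
  rw [tendstoInMeasure_iff_dist]
  intro ε hε
  show Tendsto (fun n => P {x | ε ≤ dist (V n x - W n x) 0}) atTop (nhds 0)
  have hε2 : (0:ℝ) < ε/2 := by linarith
  set f : ℕ → ENNReal := fun n => P {x | ε ≤ dist (V n x - W n x) 0} with hfdef
  have key : Tendsto (fun n => (f n).toReal) atTop (nhds 0) := by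
    rw [Metric.tendsto_atTop]
    intro r hr
    obtain ⟨K, hK, hKb⟩ := htight (r/2) (by linarith)
    obtain ⟨m, hm⟩ := exists_nat_ge ((4*K+2)/ε)
    have h4 : 4*K+2 ≤ (m:ℝ)*ε := (div_le_iff₀ hε).mp hm
    set A : ℕ → ℕ → Set Ω := fun j n =>
      {ω | V n ω ≤ ((-K + j*(ε/2)) - ε/2) ∧ ((-K + j*(ε/2)) - ε/2) + ε/2 ≤ W n ω} with hA
    set B : ℕ → ℕ → Set Ω := fun j n =>
      {ω | ((-K + j*(ε/2)) + ε/2) + ε/2 ≤ V n ω ∧ W n ω ≤ ((-K + j*(ε/2)) + ε/2)} with hB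
    have cover : ∀ n, {x | ε ≤ dist (V n x - W n x) 0} ⊆
        {ω | K < |W n ω|} ∪ ⋃ j ∈ Finset.range m, (A j n ∪ B j n) := by
      intro n ω hω
      simp only [Set.mem_setOf_eq, Real.dist_eq, sub_zero] at hω
      by_cases hW : K < |W n ω|
      · exact Or.inl hW
      right
      push_neg at hW
      have hWK := abs_le.mp hW
      set j : ℕ := ⌊(W n ω + K)/(ε/2)⌋₊ with hj
      have hnn : 0 ≤ (W n ω + K)/(ε/2) := div_nonneg (by linarith [hWK.1]) hε2.le
      have hjle : (j:ℝ) * (ε/2) ≤ W n ω + K := by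
        have h := Nat.floor_le hnn
        have := mul_le_mul_of_nonneg_right h hε2.le
        rwa [div_mul_cancel₀ _ hε2.ne'] at this
      have hjlt : W n ω + K < ((j:ℝ)+1) * (ε/2) := by
        have h := Nat.lt_floor_add_one ((W n ω + K)/(ε/2))
        have := mul_lt_mul_of_pos_right h hε2
        rwa [div_mul_cancel₀ _ hε2.ne'] at this
      have hjm : j < m := by
        have h2K : W n ω + K < (m:ℝ) * (ε/2) := by nlinarith [hWK.2]
        have : ((j:ℝ)) * (ε/2) < (m:ℝ)*(ε/2) := lt_of_le_of_lt hjle h2K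
        exact_mod_cast (mul_lt_mul_iff_left₀ hε2).mp this
      have hmem : ω ∈ A j n ∪ B j n := by
        rcases le_abs.mp hω with h | h
        · exact Or.inr ⟨by linarith, by linarith⟩
        · exact Or.inl ⟨by linarith, by linarith⟩
      exact Set.mem_biUnion (Finset.mem_range.mpr hjm) hmem
    have bound : ∀ n, (f n).toReal ≤ (P {ω | K < |W n ω|}).toReal +
        ∑ j ∈ Finset.range m, ((P (A j n)).toReal + (P (B j n)).toReal) := by
      intro n
      have hle : f n ≤ P {ω | K < |W n ω|} +
          ∑ j ∈ Finset.range m, (P (A j n) + P (B j n)) := by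
        calc f n ≤ P ({ω | K < |W n ω|} ∪ ⋃ j ∈ Finset.range m, (A j n ∪ B j n)) :=
              measure_mono (cover n)
          _ ≤ P {ω | K < |W n ω|} + P (⋃ j ∈ Finset.range m, (A j n ∪ B j n)) :=
              measure_union_le _ _
          _ ≤ P {ω | K < |W n ω|} + ∑ j ∈ Finset.range m, P (A j n ∪ B j n) :=
              add_le_add_right (measure_biUnion_finset_le _ _) _
          _ ≤ _ := add_le_add_right
              (Finset.sum_le_sum fun j _ => measure_union_le _ _) _
      have hne : (P {ω | K < |W n ω|} +
          ∑ j ∈ Finset.range m, (P (A j n) + P (B j n))) ≠ ⊤ := by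
        refine ENNReal.add_ne_top.mpr ⟨measure_ne_top _ _, ?_⟩
        exact ENNReal.sum_ne_top.mpr fun j _ =>
          ENNReal.add_ne_top.mpr ⟨measure_ne_top _ _, measure_ne_top _ _⟩
      have := ENNReal.toReal_mono hne hle
      rw [ENNReal.toReal_add (measure_ne_top _ _)
          (ENNReal.sum_ne_top.mpr fun j _ =>
            ENNReal.add_ne_top.mpr ⟨measure_ne_top _ _, measure_ne_top _ _⟩),
        ENNReal.toReal_sum (fun j _ =>
            ENNReal.add_ne_top.mpr ⟨measure_ne_top _ _, measure_ne_top _ _⟩)] at this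
      have heq : ∑ a ∈ Finset.range m, (P (A a n) + P (B a n)).toReal
          = ∑ j ∈ Finset.range m, ((P (A j n)).toReal + (P (B j n)).toReal) :=
        Finset.sum_congr rfl fun j _ =>
          ENNReal.toReal_add (measure_ne_top _ _) (measure_ne_top _ _)
      rw [heq] at this
      exact this
    have hsum : Tendsto (fun n => ∑ j ∈ Finset.range m,
        ((P (A j n)).toReal + (P (B j n)).toReal)) atTop (nhds 0) := by
      have := tendsto_finset_sum (Finset.range m)
        (fun j (_ : j ∈ Finset.range m) =>
          ((h1 ((-K + j*(ε/2)) - ε/2) (ε/2) hε2).add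
           (h2 ((-K + j*(ε/2)) + ε/2) (ε/2) hε2)))
      simp only [add_zero, Finset.sum_const_zero] at this
      exact this
    have hev := hsum.eventually (gt_mem_nhds (show (0:ℝ) < r/2 by linarith))
    obtain ⟨N, hN⟩ := eventually_atTop.mp hev
    refine ⟨N, fun n hn => ?_⟩
    rw [Real.dist_eq, sub_zero, abs_of_nonneg ENNReal.toReal_nonneg]
    have hb := bound n
    have ht := hKb n
    have hs := hN n hn
    linarith
  refine (ENNReal.tendsto_toReal_iff (f := f) (fun n => measure_ne_top P _)
      (x := 0) (by simp)).mp ?_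
  simpa using key
end

section
/- Let (X_n)_{n∈ℤ} be a stationary, strongly mixing sequence with distribution function F, p ∈ (0,1), t_p = F^{-1}(p), and assume ∑_{n=1}^∞ α(n) < ∞ and that F is continuous at t_p with F(t_p) = p. Then for every fixed t ∈ ℝ and every ρ > 0, E[(√n (p − F_n(t_p) − F(t_p + t·n^{−1/(2ρ)}) + F_n(t_p + t·n^{−1/(2ρ)})))²] → 0 as n → ∞; in particular √n (p − F_n(t_p) − F(t_p + t·n^{−1/(2ρ)}) + F_n(t_p + t·n^{−1/(2ρ)})) → 0 in probability. -/
open MeasureTheory ProbabilityTheory Filter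

noncomputable section

/-- The σ-field generated by the random variables `X i`, `i ∈ S`. -/
def sigmaOf {Ω : Type*} (X : ℤ → Ω → ℝ) (S : Set ℤ) : MeasurableSpace Ω :=
  ⨆ i ∈ S, MeasurableSpace.comap (X i) inferInstance

/-- The strong mixing (α-mixing) coefficients of the sequence `X`:
`α(k) = sup {|P(A ∩ B) - P(A)P(B)| : A ∈ F_1^n, B ∈ F_{n+k}^∞, n ∈ ℤ}`. -/
def alphaMix {Ω : Type*} [MeasurableSpace Ω] (P : Measure Ω) (X : ℤ → Ω → ℝ) (k : ℕ) : ℝ :=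
  sSup { r : ℝ | ∃ (n : ℤ) (A B : Set Ω),
    MeasurableSet[sigmaOf X (Set.Icc 1 n)] A ∧
    MeasurableSet[sigmaOf X (Set.Ici (n + k))] B ∧
    r = |(P (A ∩ B)).toReal - (P A).toReal * (P B).toReal| }

/-- Stationarity of the doubly infinite sequence `X`. -/
def IsStationaryZ {Ω : Type*} [MeasurableSpace Ω] (P : Measure Ω) (X : ℤ → Ω → ℝ) : Prop :=
  ∀ k : ℤ, Measure.map (fun ω => fun n : ℤ => X (n + k) ω) P
      = Measure.map (fun ω => fun n : ℤ => X n ω) P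

/-- Strong mixing: the mixing coefficients tend to zero. -/
def StronglyMixing {Ω : Type*} [MeasurableSpace Ω] (P : Measure Ω) (X : ℤ → Ω → ℝ) : Prop :=
  Tendsto (alphaMix P X) atTop (nhds 0)

/-- Empirical distribution function of `X_1, …, X_n`. -/
def empDF {Ω : Type*} (X : ℤ → Ω → ℝ) (n : ℕ) (t : ℝ) (ω : Ω) : ℝ :=
  (∑ i ∈ Finset.range n, if X ((i : ℤ) + 1) ω ≤ t then (1 : ℝ) else 0) / n

/-- Empirical `p`-quantile of the sample `X_1, …, X_n`. -/
def sampleQuantile {Ω : Type*} (X : ℤ → Ω → ℝ) (n : ℕ) (p : ℝ) (ω : Ω) : ℝ :=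
  sInf { t : ℝ | p ≤ empDF X n t ω }

lemma sumA (φ : ℕ → ℝ) (hφ : ∀ k, 0 ≤ φ k) (n i : ℕ) (hi : i < n) :
    ∑ j ∈ Finset.range n, φ (((j : ℤ) - (i : ℤ)).natAbs) ≤
      φ 0 + 2 * ∑ k ∈ Finset.range (n - 1), φ (k + 1) := by
  have hS : ∀ a : ℕ, a ≤ n - 1 →
      ∑ k ∈ Finset.range a, φ (k + 1) ≤ ∑ k ∈ Finset.range (n - 1), φ (k + 1) := fun a ha =>
    Finset.sum_le_sum_of_subset_of_nonneg (Finset.range_subset_range.2 ha) (fun _ _ _ => hφ _)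
  have h1 : ∑ j ∈ Finset.Ico 0 i, φ (((j : ℤ) - (i : ℤ)).natAbs)
      = ∑ k ∈ Finset.range i, φ (k + 1) := by
    rw [← Finset.range_eq_Ico, ← Finset.sum_range_reflect (fun k => φ (k + 1)) i]
    refine Finset.sum_congr rfl fun j hj => ?_
    have := Finset.mem_range.1 hj
    show φ _ = φ (i - 1 - j + 1)
    congr 1
    omega
  have h2 : ∑ j ∈ Finset.Ico (i + 1) n, φ (((j : ℤ) - (i : ℤ)).natAbs)
      = ∑ k ∈ Finset.range (n - (i + 1)), φ (k + 1) := by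
    rw [Finset.sum_Ico_eq_sum_range]
    exact Finset.sum_congr rfl fun k _ => by congr 1; omega
  have h0 : (((i : ℤ) - (i : ℤ)).natAbs) = 0 := by omega
  calc ∑ j ∈ Finset.range n, φ (((j : ℤ) - (i : ℤ)).natAbs)
      = ∑ j ∈ Finset.Ico 0 i, φ (((j : ℤ) - (i : ℤ)).natAbs)
        + (φ (((i : ℤ) - (i : ℤ)).natAbs)
          + ∑ j ∈ Finset.Ico (i + 1) n, φ (((j : ℤ) - (i : ℤ)).natAbs)) := by
        rw [Finset.range_eq_Ico, ← Finset.sum_Ico_consecutive _ (Nat.zero_le i) hi.le,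
          Finset.sum_eq_sum_Ico_succ_bot hi]
    _ ≤ φ 0 + 2 * ∑ k ∈ Finset.range (n - 1), φ (k + 1) := by
        rw [h1, h2, h0]
        have a1 := hS i (by omega)
        have a2 := hS (n - (i + 1)) (by omega)
        linarith

/-- Key second-moment estimate in the proof of the weak Bahadur representation:
`E[(√n (p - F_n(t_p) - F(t_p + t n^{-1/(2ρ)}) + F_n(t_p + t n^{-1/(2ρ)})))²] → 0`,
and in particular the quantity tends to `0` in probability. -/
theorem empirical_increment_second_moment
    {Ω : Type*} [MeasurableSpace Ω] (P : Measure Ω) [IsProbabilityMeasure P]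
    (X : ℤ → Ω → ℝ) (hmeas : ∀ i, Measurable (X i))
    (hstat : IsStationaryZ P X) (hmix : StronglyMixing P X)
    (F : ℝ → ℝ) (hF : ∀ (i : ℤ) (t : ℝ), F t = (P {ω | X i ω ≤ t}).toReal)
    (p : ℝ) (hp : p ∈ Set.Ioo (0 : ℝ) 1)
    (tp : ℝ) (htp : tp = sInf { t : ℝ | p ≤ F t })
    (hcont : ContinuousAt F tp) (hFtp : F tp = p)
    (hsum : Summable (alphaMix P X)) :
    ∀ (t ρ : ℝ), 0 < ρ →
      (Tendsto
        (fun n : ℕ => ∫ ω,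
          (Real.sqrt n * (p - empDF X n tp ω
            - F (tp + t * (n : ℝ) ^ (-(1 / (2 * ρ))))
            + empDF X n (tp + t * (n : ℝ) ^ (-(1 / (2 * ρ)))) ω)) ^ 2 ∂P)
        atTop (nhds 0)) ∧
      TendstoInMeasure P
        (fun (n : ℕ) ω =>
          Real.sqrt n * (p - empDF X n tp ω
            - F (tp + t * (n : ℝ) ^ (-(1 / (2 * ρ))))
            + empDF X n (tp + t * (n : ℝ) ^ (-(1 / (2 * ρ)))) ω))
        atTop (fun _ => (0 : ℝ)) := by
  classical
  intro t ρ hρ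
  set s : ℕ → ℝ := fun n => tp + t * (n : ℝ) ^ (-(1 / (2 * ρ))) with hs_def
  set f : ℕ → Ω → ℝ := fun n ω =>
    Real.sqrt n * (p - empDF X n tp ω - F (s n) + empDF X n (s n) ω) with hf_def
  set lo : ℕ → ℝ := fun n => min tp (s n) with hlo_def
  set hi : ℕ → ℝ := fun n => max tp (s n) with hhi_def
  set D : ℕ → ℤ → Set Ω := fun n i => X i ⁻¹' Set.Ioc (lo n) (hi n) with hD_def
  set c : ℕ → ℝ := fun n => F (hi n) - F (lo n) with hc_def
  -- basic facts
  have hPle1 : ∀ A : Set Ω, (P A).toReal ≤ 1 := fun A => by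
    have h := ENNReal.toReal_mono (measure_ne_top P _) (measure_mono (Set.subset_univ A))
    simpa using h
  have hDmeas : ∀ n i, MeasurableSet (D n i) := fun n i => (hmeas i) measurableSet_Ioc
  have hPD : ∀ n i, (P (D n i)).toReal = c n := by
    intro n i
    have hset : D n i = {ω | X i ω ≤ hi n} \ {ω | X i ω ≤ lo n} := by
      ext ω
      simp only [hD_def, Set.mem_preimage, Set.mem_Ioc, Set.mem_diff, Set.mem_setOf_eq, not_le]
      tauto
    have hsub : {ω | X i ω ≤ lo n} ⊆ {ω | X i ω ≤ hi n} :=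
      fun ω hω => le_trans hω (min_le_max : lo n ≤ hi n)
    rw [hset, measure_diff hsub ((hmeas i) measurableSet_Iic).nullMeasurableSet
        (measure_ne_top P _),
      ENNReal.toReal_sub_of_le (measure_mono hsub) (measure_ne_top P _), ← hF i, ← hF i]
  have hc0 : ∀ n, 0 ≤ c n := fun n => (hPD n 0) ▸ ENNReal.toReal_nonneg
  have hc1 : ∀ n, c n ≤ 1 := fun n => (hPD n 0) ▸ hPle1 _
  -- indicator integrals
  have hind_int : ∀ A : Set Ω, MeasurableSet A →
      Integrable (A.indicator fun _ => (1 : ℝ)) P :=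
    fun A hA => (integrable_const (1 : ℝ)).indicator hA
  have hind_val : ∀ A : Set Ω, MeasurableSet A →
      ∫ ω, A.indicator (fun _ => (1 : ℝ)) ω ∂P = (P A).toReal := fun A hA => by
    rw [MeasureTheory.integral_indicator_const (1 : ℝ) hA]; simp; rfl
  set h : ℕ → ℤ → Ω → ℝ :=
    fun n i ω => (D n i).indicator (fun _ => (1 : ℝ)) ω - c n with hh_def
  have hprod : ∀ n (i j : ℤ) (ω : Ω), h n i ω * h n j ω =
      (D n i ∩ D n j).indicator (fun _ => (1 : ℝ)) ω
        - c n * (D n i).indicator (fun _ => (1 : ℝ)) ω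
        - c n * (D n j).indicator (fun _ => (1 : ℝ)) ω + c n * c n := by
    intro n i j ω
    by_cases h1 : ω ∈ D n i <;> by_cases h2 : ω ∈ D n j <;>
      simp [hh_def, Set.indicator_apply, h1, h2, Set.mem_inter_iff] <;> ring
  have hint_h2 : ∀ n (i j : ℤ), Integrable (fun ω => h n i ω * h n j ω) P := by
    intro n i j
    refine Integrable.congr ?_ (Filter.Eventually.of_forall fun ω => (hprod n i j ω).symm)
    exact ((((hind_int _ ((hDmeas n i).inter (hDmeas n j))).sub
      ((hind_int _ (hDmeas n i)).const_mul _)).sub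
      ((hind_int _ (hDmeas n j)).const_mul _)).add (integrable_const _))
  have hcov : ∀ n (i j : ℤ), ∫ ω, h n i ω * h n j ω ∂P
      = (P (D n i ∩ D n j)).toReal - c n * c n := by
    intro n i j
    have hA := hind_int _ ((hDmeas n i).inter (hDmeas n j))
    have hB := (hind_int _ (hDmeas n i)).const_mul (c n)
    have hC := (hind_int _ (hDmeas n j)).const_mul (c n)
    have h1 : Integrable (fun a => (D n i ∩ D n j).indicator (fun _ => (1 : ℝ)) a
        - c n * (D n i).indicator (fun _ => (1 : ℝ)) a) P := hA.sub hB
    have h2 : Integrable (fun a => (D n i ∩ D n j).indicator (fun _ => (1 : ℝ)) a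
        - c n * (D n i).indicator (fun _ => (1 : ℝ)) a
        - c n * (D n j).indicator (fun _ => (1 : ℝ)) a) P := h1.sub hC
    rw [integral_congr_ae (Filter.Eventually.of_forall (hprod n i j)),
      integral_add h2 (integrable_const _), integral_sub h1 hC, integral_sub hA hB,
      integral_const_mul, integral_const_mul, integral_const,
      hind_val _ ((hDmeas n i).inter (hDmeas n j)), hind_val _ (hDmeas n i),
      hind_val _ (hDmeas n j), hPD, hPD]
    simp only [measure_univ, ENNReal.toReal_one, smul_eq_mul, one_mul, probReal_univ]
    ring
  -- mixing coefficient facts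
  have hbdd : ∀ k : ℕ, BddAbove { r : ℝ | ∃ (n : ℤ) (A B : Set Ω),
      MeasurableSet[sigmaOf X (Set.Icc 1 n)] A ∧
      MeasurableSet[sigmaOf X (Set.Ici (n + k))] B ∧
      r = |(P (A ∩ B)).toReal - (P A).toReal * (P B).toReal| } := by
    intro k
    refine ⟨1, ?_⟩
    rintro r ⟨n, A, B, -, -, rfl⟩
    have h1 := hPle1 (A ∩ B)
    have h2 := hPle1 A
    have h3 := hPle1 B
    have h4 : (0:ℝ) ≤ (P (A ∩ B)).toReal := ENNReal.toReal_nonneg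
    have h5 : (0:ℝ) ≤ (P A).toReal := ENNReal.toReal_nonneg
    have h6 : (0:ℝ) ≤ (P B).toReal := ENNReal.toReal_nonneg
    rw [abs_le]
    constructor <;> nlinarith
  have hα0 : ∀ k, 0 ≤ alphaMix P X k := by
    intro k
    exact le_csSup (hbdd k) ⟨1, ∅, ∅,
      (@MeasurableSet.empty _ (sigmaOf X (Set.Icc 1 1))),
      (@MeasurableSet.empty _ (sigmaOf X (Set.Ici (1 + (k:ℤ))))), by simp⟩
  have hmixbd : ∀ (n : ℕ) (a : ℤ), 1 ≤ a → ∀ k : ℕ,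
      |(P (D n a ∩ D n (a + k))).toReal - c n * c n| ≤ alphaMix P X k := by
    intro n a ha k
    have hA : MeasurableSet[sigmaOf X (Set.Icc 1 a)] (D n a) := by
      have hle : MeasurableSpace.comap (X a) inferInstance ≤ sigmaOf X (Set.Icc 1 a) :=
        le_iSup₂ (f := fun (i : ℤ) (_ : i ∈ Set.Icc 1 a) =>
          MeasurableSpace.comap (X i) inferInstance) a ⟨ha, le_refl a⟩
      exact hle _ ⟨Set.Ioc (lo n) (hi n), measurableSet_Ioc, rfl⟩
    have hB : MeasurableSet[sigmaOf X (Set.Ici (a + k))] (D n (a + k)) := by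
      have hle : MeasurableSpace.comap (X (a + k)) inferInstance
          ≤ sigmaOf X (Set.Ici (a + k)) :=
        le_iSup₂ (f := fun (i : ℤ) (_ : i ∈ Set.Ici (a + (k:ℤ))) =>
          MeasurableSpace.comap (X i) inferInstance) (a + k) (Set.mem_Ici.2 le_rfl)
      exact hle _ ⟨Set.Ioc (lo n) (hi n), measurableSet_Ioc, rfl⟩
    have hmem : |(P (D n a ∩ D n (a + k))).toReal
        - (P (D n a)).toReal * (P (D n (a + k))).toReal|
        ∈ { r : ℝ | ∃ (m : ℤ) (A B : Set Ω),
          MeasurableSet[sigmaOf X (Set.Icc 1 m)] A ∧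
          MeasurableSet[sigmaOf X (Set.Ici (m + k))] B ∧
          r = |(P (A ∩ B)).toReal - (P A).toReal * (P B).toReal| } :=
      ⟨a, D n a, D n (a + k), hA, hB, rfl⟩
    have hle := le_csSup (hbdd k) hmem
    rwa [hPD, hPD] at hle
  -- pointwise identity
  have hee : ∀ n : ℕ, (if tp ≤ s n then (1:ℝ) else -1) * (if tp ≤ s n then (1:ℝ) else -1) = 1 := by
    intro n; split_ifs <;> norm_num
  have hterm : ∀ (n : ℕ) (i : ℤ) (ω : Ω),
      ((if X i ω ≤ s n then (1:ℝ) else 0) - (if X i ω ≤ tp then 1 else 0))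
        = (if tp ≤ s n then (1:ℝ) else -1) * (D n i).indicator (fun _ => (1:ℝ)) ω := by
    intro n i ω
    by_cases hts : tp ≤ s n
    · have hl : lo n = tp := min_eq_left hts
      have hh : hi n = s n := max_eq_right hts
      have hmem : ω ∈ D n i ↔ (tp < X i ω ∧ X i ω ≤ s n) := by
        simp [hD_def, Set.mem_preimage, Set.mem_Ioc, hl, hh]
      by_cases hx1 : X i ω ≤ tp
      · have hx2 : X i ω ≤ s n := le_trans hx1 hts
        have hni : ω ∉ D n i := fun hd => absurd ((hmem.1 hd).1) (not_lt.2 hx1)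
        simp [hx1, hx2, hts, Set.indicator_apply, hni]
      · by_cases hx2 : X i ω ≤ s n
        · have hdi : ω ∈ D n i := hmem.2 ⟨not_le.1 hx1, hx2⟩
          simp [hx1, hx2, hts, Set.indicator_apply, hdi]
        · have hni : ω ∉ D n i := fun hd => absurd ((hmem.1 hd).2) hx2
          simp [hx1, hx2, hts, Set.indicator_apply, hni]
    · have hst : s n ≤ tp := le_of_not_ge hts
      have hl : lo n = s n := min_eq_right hst
      have hh : hi n = tp := max_eq_left hst
      have hmem : ω ∈ D n i ↔ (s n < X i ω ∧ X i ω ≤ tp) := by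
        simp [hD_def, Set.mem_preimage, Set.mem_Ioc, hl, hh]
      by_cases hx1 : X i ω ≤ s n
      · have hx2 : X i ω ≤ tp := le_trans hx1 hst
        have hni : ω ∉ D n i := fun hd => absurd ((hmem.1 hd).1) (not_lt.2 hx1)
        simp [hx1, hx2, hts, Set.indicator_apply, hni]
      · by_cases hx2 : X i ω ≤ tp
        · have hdi : ω ∈ D n i := hmem.2 ⟨not_le.1 hx1, hx2⟩
          simp [hx1, hx2, hts, Set.indicator_apply, hdi]
        · have hni : ω ∉ D n i := fun hd => absurd ((hmem.1 hd).2) hx2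
          simp [hx1, hx2, hts, Set.indicator_apply, hni]
  have hFs : ∀ n : ℕ, F (s n) - F tp = (if tp ≤ s n then (1:ℝ) else -1) * c n := by
    intro n
    by_cases hts : tp ≤ s n
    · rw [if_pos hts, one_mul, hc_def]
      simp only [hhi_def, hlo_def, max_eq_right hts, min_eq_left hts]
    · have hst : s n ≤ tp := le_of_not_ge hts
      rw [if_neg hts, hc_def]
      simp only [hhi_def, hlo_def, max_eq_left hst, min_eq_right hst]
      ring
  have hmain : ∀ n : ℕ, 1 ≤ n → ∀ ω : Ω,
      p - empDF X n tp ω - F (s n) + empDF X n (s n) ω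
        = (if tp ≤ s n then (1:ℝ) else -1)
            * ((∑ i ∈ Finset.range n, h n ((i : ℤ) + 1) ω) / n) := by
    intro n hn ω
    have hnR : (0:ℝ) < n := by exact_mod_cast hn
    have hsumh : ∑ i ∈ Finset.range n, h n ((i : ℤ) + 1) ω
        = (if tp ≤ s n then (1:ℝ) else -1) *
            ((∑ i ∈ Finset.range n, if X ((i : ℤ) + 1) ω ≤ s n then (1:ℝ) else 0)
            - (∑ i ∈ Finset.range n, if X ((i : ℤ) + 1) ω ≤ tp then (1:ℝ) else 0))
          - n * c n := by
      rw [← Finset.sum_sub_distrib, Finset.mul_sum]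
      have : ∀ i ∈ Finset.range n, h n ((i : ℤ) + 1) ω =
          (if tp ≤ s n then (1:ℝ) else -1) *
            ((if X ((i : ℤ) + 1) ω ≤ s n then (1:ℝ) else 0)
              - (if X ((i : ℤ) + 1) ω ≤ tp then (1:ℝ) else 0)) - c n := by
        intro i _
        rw [hterm n ((i : ℤ) + 1) ω, ← mul_assoc, hee, one_mul, hh_def]
      rw [Finset.sum_congr rfl this, Finset.sum_sub_distrib, Finset.sum_const,
        Finset.card_range, nsmul_eq_mul]
    rw [hsumh]
    simp only [empDF]
    rw [← hFtp]
    have hne : (n:ℝ) ≠ 0 := ne_of_gt hnR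
    by_cases hts : tp ≤ s n
    · have hFs1 : F (s n) = F tp + c n := by
        have := hFs n; rw [if_pos hts, one_mul] at this; linarith
      simp only [if_pos hts, one_mul, hFs1]
      field_simp
      ring
    · have hFs1 : F (s n) = F tp - c n := by
        have := hFs n; rw [if_neg hts] at this; linarith
      simp only [if_neg hts, hFs1]
      field_simp
      ring
  have hkey : ∀ n : ℕ, 1 ≤ n → ∀ ω : Ω,
      (f n ω) ^ 2 = (∑ i ∈ Finset.range n, h n ((i : ℤ) + 1) ω) ^ 2 / n := by
    intro n hn ω
    have hnR : (0:ℝ) < n := by exact_mod_cast hn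
    rw [hf_def]
    show (Real.sqrt n * (p - empDF X n tp ω - F (s n) + empDF X n (s n) ω)) ^ 2 = _
    rw [hmain n hn ω, mul_pow, mul_pow, Real.sq_sqrt (Nat.cast_nonneg n), div_pow]
    have : (if tp ≤ s n then (1:ℝ) else -1) ^ 2 = 1 := by rw [sq, hee]
    rw [this, one_mul]
    field_simp
  -- integral formula
  have hIeq : ∀ n : ℕ, 1 ≤ n → ∫ ω, (f n ω) ^ 2 ∂P
      = (∑ i ∈ Finset.range n, ∑ j ∈ Finset.range n,
          ((P (D n ((i : ℤ) + 1) ∩ D n ((j : ℤ) + 1))).toReal - c n * c n)) / n := by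
    intro n hn
    rw [integral_congr_ae (Filter.Eventually.of_forall fun ω => hkey n hn ω), integral_div]
    congr 1
    have hsq : ∀ ω : Ω, (∑ i ∈ Finset.range n, h n ((i : ℤ) + 1) ω) ^ 2
        = ∑ i ∈ Finset.range n, ∑ j ∈ Finset.range n,
            h n ((i : ℤ) + 1) ω * h n ((j : ℤ) + 1) ω := by
      intro ω; rw [sq, Finset.sum_mul_sum]
    rw [integral_congr_ae (Filter.Eventually.of_forall hsq),
      integral_finset_sum _ (fun i _ => integrable_finset_sum _ (fun j _ => hint_h2 n _ _))]
    refine Finset.sum_congr rfl fun i _ => ?_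
    rw [integral_finset_sum _ (fun j _ => hint_h2 n _ _)]
    exact Finset.sum_congr rfl fun j _ => hcov n _ _
  -- elementary covariance bound
  have htriv : ∀ n (i j : ℤ), |(P (D n i ∩ D n j)).toReal - c n * c n| ≤ c n := by
    intro n i j
    have h1 : (P (D n i ∩ D n j)).toReal ≤ c n := by
      rw [← hPD n i]
      exact ENNReal.toReal_mono (measure_ne_top P _) (measure_mono Set.inter_subset_left)
    have h2 : (0:ℝ) ≤ (P (D n i ∩ D n j)).toReal := ENNReal.toReal_nonneg
    have h3 := hc0 n
    have h4 := hc1 n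
    rw [abs_le]
    constructor <;> nlinarith
  have hmix' : ∀ (n : ℕ) (i j : ℕ), i ≠ j →
      |(P (D n ((i : ℤ) + 1) ∩ D n ((j : ℤ) + 1))).toReal - c n * c n|
        ≤ alphaMix P X (((j : ℤ) - (i : ℤ)).natAbs) := by
    intro n i j hij
    rcases lt_or_gt_of_ne hij with hlt | hgt
    · have hk : ((i : ℤ) + 1) + ((((j : ℤ) - (i : ℤ)).natAbs : ℤ)) = (j : ℤ) + 1 := by omega
      have hbd := hmixbd n ((i : ℤ) + 1) (by omega) (((j : ℤ) - (i : ℤ)).natAbs)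
      rwa [hk] at hbd
    · have hk : ((j : ℤ) + 1) + ((((j : ℤ) - (i : ℤ)).natAbs : ℤ)) = (i : ℤ) + 1 := by omega
      have hbd := hmixbd n ((j : ℤ) + 1) (by omega) (((j : ℤ) - (i : ℤ)).natAbs)
      rw [hk] at hbd
      rwa [Set.inter_comm] at hbd
  -- tail sums
  set T : ℕ → ℝ := fun m => ∑' k : ℕ, alphaMix P X (k + (m + 1)) with hT_def
  have hT0 : Tendsto T atTop (nhds 0) := by
    have hta := tendsto_sum_nat_add (f := alphaMix P X)
    exact hta.comp (tendsto_add_atTop_nat 1)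
  have hTnn : ∀ m, 0 ≤ T m := fun m => tsum_nonneg fun k => hα0 _
  have hB : ∀ n m : ℕ, ∑ k ∈ Finset.range (n - 1), min (c n) (alphaMix P X (k + 1))
      ≤ (m : ℝ) * c n + T m := by
    intro n m
    rcases le_or_gt (n - 1) m with hcase | hcase
    · calc ∑ k ∈ Finset.range (n - 1), min (c n) (alphaMix P X (k + 1))
          ≤ ∑ _k ∈ Finset.range (n - 1), c n :=
            Finset.sum_le_sum fun k _ => min_le_left _ _
        _ = ((n - 1 : ℕ) : ℝ) * c n := by
            rw [Finset.sum_const, Finset.card_range, nsmul_eq_mul]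
        _ ≤ (m : ℝ) * c n := mul_le_mul_of_nonneg_right (by exact_mod_cast hcase) (hc0 n)
        _ ≤ (m : ℝ) * c n + T m := le_add_of_nonneg_right (hTnn m)
    · rw [Finset.range_eq_Ico, ← Finset.sum_Ico_consecutive _ (Nat.zero_le m) hcase.le]
      have hA1 : ∑ k ∈ Finset.Ico 0 m, min (c n) (alphaMix P X (k + 1)) ≤ (m : ℝ) * c n := by
        calc ∑ k ∈ Finset.Ico 0 m, min (c n) (alphaMix P X (k + 1))
            ≤ ∑ _k ∈ Finset.Ico 0 m, c n := Finset.sum_le_sum fun k _ => min_le_left _ _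
          _ = (m : ℝ) * c n := by
              rw [Finset.sum_const, Nat.card_Ico, nsmul_eq_mul]
              norm_num
      have hA2 : ∑ k ∈ Finset.Ico m (n - 1), min (c n) (alphaMix P X (k + 1)) ≤ T m := by
        rw [Finset.sum_Ico_eq_sum_range]
        calc ∑ i ∈ Finset.range (n - 1 - m), min (c n) (alphaMix P X (m + i + 1))
            ≤ ∑ i ∈ Finset.range (n - 1 - m), alphaMix P X (i + (m + 1)) := by
              refine Finset.sum_le_sum fun i _ => le_trans (min_le_right _ _) (le_of_eq ?_)
              congr 1
              omega
          _ ≤ T m := Summable.sum_le_tsum _ (fun i _ => hα0 _)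
              ((summable_nat_add_iff (m + 1)).2 hsum)
      linarith
  -- the main bound
  have hIbd : ∀ n : ℕ, 1 ≤ n → ∀ m : ℕ,
      ∫ ω, (f n ω) ^ 2 ∂P ≤ (2 * (m : ℝ) + 1) * c n + 2 * T m := by
    intro n hn m
    have hnR : (0 : ℝ) < n := by exact_mod_cast hn
    set φ : ℕ → ℝ := fun k => if k = 0 then c n else min (c n) (alphaMix P X k) with hφ_def
    have hφ0 : ∀ k, 0 ≤ φ k := by
      intro k
      simp only [hφ_def]
      split_ifs
      · exact hc0 n
      · exact le_min (hc0 n) (hα0 k)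
    have hφbd : ∀ i ∈ Finset.range n, ∀ j ∈ Finset.range n,
        (P (D n ((i : ℤ) + 1) ∩ D n ((j : ℤ) + 1))).toReal - c n * c n
          ≤ φ (((j : ℤ) - (i : ℤ)).natAbs) := by
      intro i _ j _
      refine le_trans (le_abs_self _) ?_
      simp only [hφ_def]
      by_cases hij : i = j
      · subst hij
        have h0 : (((i : ℤ) - (i : ℤ)).natAbs) = 0 := by omega
        rw [h0, if_pos rfl]
        exact htriv n _ _
      · have hne : (((j : ℤ) - (i : ℤ)).natAbs) ≠ 0 := by omega
        rw [if_neg hne]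
        exact le_min (htriv n _ _) (hmix' n i j hij)
    have hφ0eq : φ 0 = c n := by simp [hφ_def]
    have hφk : ∀ k : ℕ, φ (k + 1) = min (c n) (alphaMix P X (k + 1)) := fun k => by
      simp only [hφ_def]
      exact if_neg (Nat.succ_ne_zero k)
    have hsum1 : ∑ k ∈ Finset.range (n - 1), φ (k + 1) ≤ (m : ℝ) * c n + T m := by
      calc ∑ k ∈ Finset.range (n - 1), φ (k + 1)
          = ∑ k ∈ Finset.range (n - 1), min (c n) (alphaMix P X (k + 1)) :=
            Finset.sum_congr rfl fun k _ => hφk k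
        _ ≤ (m : ℝ) * c n + T m := hB n m
    have hdouble : ∑ i ∈ Finset.range n, ∑ j ∈ Finset.range n,
        ((P (D n ((i : ℤ) + 1) ∩ D n ((j : ℤ) + 1))).toReal - c n * c n)
        ≤ (n : ℝ) * (c n + 2 * ((m : ℝ) * c n + T m)) := by
      calc ∑ i ∈ Finset.range n, ∑ j ∈ Finset.range n,
            ((P (D n ((i : ℤ) + 1) ∩ D n ((j : ℤ) + 1))).toReal - c n * c n)
          ≤ ∑ i ∈ Finset.range n, ∑ j ∈ Finset.range n, φ (((j : ℤ) - (i : ℤ)).natAbs) :=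
            Finset.sum_le_sum fun i hi => Finset.sum_le_sum fun j hj => hφbd i hi j hj
        _ ≤ ∑ _i ∈ Finset.range n, (φ 0 + 2 * ∑ k ∈ Finset.range (n - 1), φ (k + 1)) :=
            Finset.sum_le_sum fun i hi => sumA φ hφ0 n i (Finset.mem_range.1 hi)
        _ = (n : ℝ) * (φ 0 + 2 * ∑ k ∈ Finset.range (n - 1), φ (k + 1)) := by
            rw [Finset.sum_const, Finset.card_range, nsmul_eq_mul]
        _ ≤ (n : ℝ) * (c n + 2 * ((m : ℝ) * c n + T m)) := by
            refine mul_le_mul_of_nonneg_left ?_ hnR.le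
            rw [hφ0eq]
            linarith
    rw [hIeq n hn, div_le_iff₀ hnR]
    calc ∑ i ∈ Finset.range n, ∑ j ∈ Finset.range n,
          ((P (D n ((i : ℤ) + 1) ∩ D n ((j : ℤ) + 1))).toReal - c n * c n)
        ≤ (n : ℝ) * (c n + 2 * ((m : ℝ) * c n + T m)) := hdouble
      _ = ((2 * (m : ℝ) + 1) * c n + 2 * T m) * n := by ring
  have hInn : ∀ n : ℕ, 0 ≤ ∫ ω, (f n ω) ^ 2 ∂P := fun n =>
    integral_nonneg fun ω => sq_nonneg _
  -- c n → 0
  have hc_tendsto : Tendsto c atTop (nhds 0) := by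
    have h1 : Tendsto (fun n : ℕ => ((n : ℝ)) ^ (-(1 / (2 * ρ)))) atTop (nhds 0) :=
      (tendsto_rpow_neg_atTop (by positivity)).comp tendsto_natCast_atTop_atTop
    have hs_t : Tendsto s atTop (nhds tp) := by
      rw [hs_def]
      have h2 : Tendsto (fun n : ℕ => tp + t * (n : ℝ) ^ (-(1 / (2 * ρ)))) atTop
          (nhds (tp + t * 0)) := tendsto_const_nhds.add (tendsto_const_nhds.mul h1)
      simpa using h2
    have hhi_t : Tendsto (fun n => hi n) atTop (nhds tp) := by
      rw [hhi_def]
      have h2 : Tendsto (fun n : ℕ => max tp (s n)) atTop (nhds (max tp tp)) :=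
        tendsto_const_nhds.max hs_t
      simpa using h2
    have hlo_t : Tendsto (fun n => lo n) atTop (nhds tp) := by
      rw [hlo_def]
      have h2 : Tendsto (fun n : ℕ => min tp (s n)) atTop (nhds (min tp tp)) :=
        tendsto_const_nhds.min hs_t
      simpa using h2
    have h3 : Tendsto (fun n => F (hi n) - F (lo n)) atTop (nhds (F tp - F tp)) :=
      (hcont.tendsto.comp hhi_t).sub (hcont.tendsto.comp hlo_t)
    rw [hc_def]
    simpa using h3
  -- the L² convergence
  have H : Tendsto (fun n : ℕ => ∫ ω, (f n ω) ^ 2 ∂P) atTop (nhds 0) := by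
    rw [NormedAddCommGroup.tendsto_nhds_zero]
    intro ε hε
    obtain ⟨m, hm⟩ := (hT0.eventually_lt_const (show (0:ℝ) < ε / 4 by positivity)).exists
    have hcn : ∀ᶠ n in atTop, (2 * (m : ℝ) + 1) * c n < ε / 2 := by
      have h2 : Tendsto (fun n => (2 * (m : ℝ) + 1) * c n) atTop
          (nhds ((2 * (m : ℝ) + 1) * 0)) := tendsto_const_nhds.mul hc_tendsto
      rw [mul_zero] at h2
      exact h2.eventually_lt_const (by positivity)
    filter_upwards [hcn, eventually_ge_atTop 1] with n h1 h2
    show ‖∫ ω, (f n ω) ^ 2 ∂P‖ < ε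
    rw [Real.norm_eq_abs, abs_of_nonneg (hInn n)]
    have h3 := hIbd n h2 m
    calc ∫ ω, (f n ω) ^ 2 ∂P ≤ (2 * (m : ℝ) + 1) * c n + 2 * T m := h3
      _ < ε / 2 + 2 * (ε / 4) := by
          have := hTnn m
          apply add_lt_add h1
          linarith
      _ = ε := by ring
  constructor
  · exact H
  · show TendstoInMeasure P f atTop (fun _ => (0 : ℝ))
    rw [tendstoInMeasure_iff_dist]
    intro ε hε
    have hε2 : (0 : ℝ) < ε ^ 2 := by positivity
    have hup : Tendsto (fun n : ℕ => ENNReal.ofReal ((∫ ω, (f n ω) ^ 2 ∂P) / ε ^ 2))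
        atTop (nhds 0) := by
      have h2 : Tendsto (fun n : ℕ => (∫ ω, (f n ω) ^ 2 ∂P) / ε ^ 2) atTop
          (nhds (0 / ε ^ 2)) := H.div_const _
      rw [zero_div] at h2
      simpa using ENNReal.tendsto_ofReal h2
    refine tendsto_of_tendsto_of_tendsto_of_le_of_le' tendsto_const_nhds hup
      (Filter.Eventually.of_forall fun n => zero_le) ?_
    filter_upwards [eventually_ge_atTop 1] with n hn
    show P {ω | ε ≤ dist (f n ω) 0} ≤ ENNReal.ofReal ((∫ ω, (f n ω) ^ 2 ∂P) / ε ^ 2)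
    have hint : Integrable (fun ω => (f n ω) ^ 2) P := by
      have h4 : Integrable (fun ω => ∑ i ∈ Finset.range n, ∑ j ∈ Finset.range n,
          h n ((i : ℤ) + 1) ω * h n ((j : ℤ) + 1) ω) P :=
        integrable_finset_sum _ fun i _ => integrable_finset_sum _ fun j _ => hint_h2 n _ _
      have h5 : Integrable (fun ω =>
          (∑ i ∈ Finset.range n, h n ((i : ℤ) + 1) ω) ^ 2 / (n : ℝ)) P := by
        refine Integrable.div_const ?_ _
        refine h4.congr (Filter.Eventually.of_forall fun ω => ?_)
        exact (by rw [sq, Finset.sum_mul_sum] :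
          (∑ i ∈ Finset.range n, h n ((i : ℤ) + 1) ω) ^ 2
            = ∑ i ∈ Finset.range n, ∑ j ∈ Finset.range n,
                h n ((i : ℤ) + 1) ω * h n ((j : ℤ) + 1) ω).symm
      exact h5.congr (Filter.Eventually.of_forall fun ω => (hkey n hn ω).symm)
    have hset : {ω | ε ≤ dist (f n ω) 0} = {ω | ε ^ 2 ≤ (f n ω) ^ 2} := by
      ext ω
      simp only [Set.mem_setOf_eq, Real.dist_eq, sub_zero]
      constructor
      · intro hle
        calc ε ^ 2 ≤ |f n ω| ^ 2 := pow_le_pow_left₀ hε.le hle 2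
          _ = (f n ω) ^ 2 := sq_abs _
      · intro hle
        have h6 := Real.sqrt_le_sqrt hle
        rwa [Real.sqrt_sq hε.le, Real.sqrt_sq_eq_abs] at h6
    have hmar := mul_meas_ge_le_integral_of_nonneg (μ := P) (f := fun ω => (f n ω) ^ 2)
      (Filter.Eventually.of_forall fun ω => sq_nonneg _) hint (ε ^ 2)
    have htoReal : (P {ω | ε ^ 2 ≤ (f n ω) ^ 2}).toReal ≤ (∫ ω, (f n ω) ^ 2 ∂P) / ε ^ 2 := by
      rw [le_div_iff₀ hε2]
      rw [mul_comm]
      exact hmar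
    calc P {ω | ε ≤ dist (f n ω) 0} = P {ω | ε ^ 2 ≤ (f n ω) ^ 2} := by rw [hset]
      _ ≤ ENNReal.ofReal ((∫ ω, (f n ω) ^ 2 ∂P) / ε ^ 2) := by
          rw [← ENNReal.ofReal_toReal (measure_ne_top P _)]
          exact ENNReal.ofReal_le_ofReal htoReal
end
end
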